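/- Let t_k satisfy t₀ = 1 and t_{k+1} = (1 + √(1 + 4(η_k/η_{k+1})t_k²))/2 with η_k > 0. Then for each k: 1/2 + √(η_k/η_{k+1})·t_k ≤ t_{k+1} ≤ 1/2 + (1 + 2√(η_k/η_{k+1})·t_k)/2, and hence (1/2)√η_{k+1} ≤ √η_{k+1}·t_{k+1} - √η_k·t_k ≤ √η_{k+1}. -/
import Mathlib


theorem t_recursion_bounds (η t : ℕ → ℝ)
    (hη : ∀ k, 0 < η k) (ht0 : t 0 = 1)
    (hrec : ∀ k, t (k + 1) = (1 + Real.sqrt (1 + 4 * (η k / η (k + 1)) * t k ^ 2)) / 2) :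
    ∀ k,
      (1 / 2 + Real.sqrt (η k / η (k + 1)) * t k ≤ t (k + 1) ∧
        t (k + 1) ≤ 1 / 2 + (1 + 2 * Real.sqrt (η k / η (k + 1)) * t k) / 2) ∧
      (1 / 2 * Real.sqrt (η (k + 1)) ≤
          Real.sqrt (η (k + 1)) * t (k + 1) - Real.sqrt (η k) * t k ∧
        Real.sqrt (η (k + 1)) * t (k + 1) - Real.sqrt (η k) * t k ≤ Real.sqrt (η (k + 1))) := by
  have htnn : ∀ k, 0 ≤ t k := by
    intro k
    cases k with
    | zero => rw [ht0]; norm_num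
    | succ n =>
      rw [hrec n]
      have := Real.sqrt_nonneg (1 + 4 * (η n / η (n + 1)) * t n ^ 2)
      linarith
  intro k
  set r := η k / η (k + 1) with hr
  have hrpos : 0 < r := div_pos (hη k) (hη (k + 1))
  have hsr : Real.sqrt r = Real.sqrt (η k) / Real.sqrt (η (k + 1)) := Real.sqrt_div (hη k).le _
  have hsrnn : 0 ≤ Real.sqrt r * t k := mul_nonneg (Real.sqrt_nonneg _) (htnn k)
  have hsq : (Real.sqrt r) ^ 2 = r := Real.sq_sqrt hrpos.le
  -- lower bound on sqrt
  have hlow : 2 * (Real.sqrt r * t k) ≤ Real.sqrt (1 + 4 * r * t k ^ 2) := by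
    have h := Real.sqrt_le_sqrt (show (2 * (Real.sqrt r * t k)) ^ 2 ≤ 1 + 4 * r * t k ^ 2 by
      nlinarith [hsq])
    rwa [Real.sqrt_sq (by linarith)] at h
  -- upper bound on sqrt
  have hhigh : Real.sqrt (1 + 4 * r * t k ^ 2) ≤ 1 + 2 * (Real.sqrt r * t k) := by
    have h := Real.sqrt_le_sqrt (show 1 + 4 * r * t k ^ 2 ≤ (1 + 2 * (Real.sqrt r * t k)) ^ 2 by
      nlinarith [hsq])
    rwa [Real.sqrt_sq (by linarith)] at h
  have hpart1a : 1 / 2 + Real.sqrt r * t k ≤ t (k + 1) := by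
    rw [hrec k]; linarith
  have hpart1b : t (k + 1) ≤ 1 / 2 + (1 + 2 * Real.sqrt r * t k) / 2 := by
    rw [hrec k]; linarith
  refine ⟨⟨hpart1a, hpart1b⟩, ?_, ?_⟩
  · have hs1pos : 0 < Real.sqrt (η (k + 1)) := Real.sqrt_pos.mpr (hη (k + 1))
    have key : Real.sqrt (η (k + 1)) * Real.sqrt r = Real.sqrt (η k) := by
      rw [hsr, mul_div_cancel₀ _ (ne_of_gt hs1pos)]
    have e : Real.sqrt (η (k + 1)) * (Real.sqrt r * t k) = Real.sqrt (η k) * t k := by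
      rw [← mul_assoc, key]
    nlinarith [mul_le_mul_of_nonneg_left hpart1a hs1pos.le, e]
  · have hs1pos : 0 < Real.sqrt (η (k + 1)) := Real.sqrt_pos.mpr (hη (k + 1))
    have key : Real.sqrt (η (k + 1)) * Real.sqrt r = Real.sqrt (η k) := by
      rw [hsr, mul_div_cancel₀ _ (ne_of_gt hs1pos)]
    have e : Real.sqrt (η (k + 1)) * (Real.sqrt r * t k) = Real.sqrt (η k) * t k := by
      rw [← mul_assoc, key]
    nlinarith [mul_le_mul_of_nonneg_left hpart1b hs1pos.le, e]
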